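/- Let ρ = Σᵢ aᵢ|aᵢ⟩⟨aᵢ| be a state on ℂ^N with rational eigenvalues aᵢ = kᵢ/K for a common denominator K. Let |S⟩ = (1/√(KN)) Σ_{i=1}^N |i,i⟩_{A₁B₁} ⊗ Σ_{m=1}^K |m,m⟩_{A₂B₂}, and let P_A = Σᵢ |aᵢ⟩⟨aᵢ|_{A₁} ⊗ Σ_{m=1}^{K aᵢ} |m⟩⟨m|_{A₂}. Then ⟨S|(P_A ⊗ I_{B₁B₂})|S⟩ = 1/N, and the reduced state on registers A₁ of the normalized post-measurement state (P_A⊗I)|S⟩/‖(P_A⊗I)|S⟩‖ is ρ. -/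

import Mathlib

open Matrix
open scoped Kronecker ComplexOrder

noncomputable section

def mfun {n : Type*} [Fintype n] [DecidableEq n] (f : ℝ → ℝ) (A : Matrix n n ℂ) : Matrix n n ℂ :=
  if h : A.IsHermitian then
    h.eigenvectorUnitary.1 * Matrix.diagonal (fun i => (f (h.eigenvalues i) : ℂ)) *
      (star h.eigenvectorUnitary.1)
  else 0

def psqrt {n : Type*} [Fintype n] [DecidableEq n] (A : Matrix n n ℂ) : Matrix n n ℂ :=
  mfun Real.sqrt A

def mlog {n : Type*} [Fintype n] [DecidableEq n] (A : Matrix n n ℂ) : Matrix n n ℂ :=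
  mfun Real.log A

def traceNorm {n : Type*} [Fintype n] [DecidableEq n] (A : Matrix n n ℂ) : ℝ :=
  ((psqrt (Aᴴ * A)).trace).re

def fid {n : Type*} [Fintype n] [DecidableEq n] (ρ σ : Matrix n n ℂ) : ℝ :=
  traceNorm (psqrt ρ * psqrt σ)

def vNEntropy {n : Type*} [Fintype n] [DecidableEq n] (A : Matrix n n ℂ) : ℝ :=
  - ((A * mlog A).trace).re

def relEnt {n : Type*} [Fintype n] [DecidableEq n] (ρ σ : Matrix n n ℂ) : ℝ :=
  ((ρ * mlog ρ).trace - (ρ * mlog σ).trace).re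


/-- The shared state |S⟩ = (1/√(KN)) Σᵢ |i,i⟩_{A₁B₁} ⊗ Σₘ |m,m⟩_{A₂B₂},
as a vector on (A₁ × A₂) × (B₁ × B₂). -/
def Svec (N K : ℕ) : (Fin N × Fin K) × (Fin N × Fin K) → ℂ :=
  fun v => if v.1.1 = v.2.1 ∧ v.1.2 = v.2.2
    then ((1 / Real.sqrt (K * N) : ℝ) : ℂ) else 0

/-- The projector Σᵢ |aᵢ⟩⟨aᵢ| ⊗ Σ_{m=1}^{ka i} |m⟩⟨m| on ℂ^N ⊗ ℂ^K,
built from unit vectors `av i` and cutoffs `ka i`. -/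
def projMat {N K : ℕ} (av : Fin N → (Fin N → ℂ)) (ka : Fin N → ℕ) :
    Matrix (Fin N × Fin K) (Fin N × Fin K) ℂ :=
  fun x y => ∑ i, av i x.1 * star (av i y.1) *
    (if x.2 = y.2 ∧ (x.2 : ℕ) < ka i then 1 else 0)

/-- with ρ = Σᵢ aᵢ|aᵢ⟩⟨aᵢ|, aᵢ = kaᵢ/K, P_A as in the protocol and
ψ = (P_A ⊗ I)|S⟩: ⟨S|(P_A ⊗ I)|S⟩ = 1/N, and the reduced state on register A₁ of
the normalized post-measurement state ψ/‖ψ‖ is ρ. -/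
theorem stmt14 {N K : ℕ} (hN : 0 < N) (hK : 0 < K)
    (ρ : Matrix (Fin N) (Fin N) ℂ) (a : Fin N → ℝ) (av : Fin N → (Fin N → ℂ))
    (hao : ∀ i j, star (av i) ⬝ᵥ av j = if i = j then 1 else 0)
    (hann : ∀ i, 0 ≤ a i) (ha1 : ∑ i, a i = 1)
    (hρ : ρ = ∑ i, (a i : ℂ) • Matrix.vecMulVec (av i) (star (av i)))
    (ka : Fin N → ℕ) (hka : ∀ i, (ka i : ℝ) = K * a i)
    (ψ : (Fin N × Fin K) × (Fin N × Fin K) → ℂ)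
    (hψ : ψ = ((projMat av ka) ⊗ₖ (1 : Matrix (Fin N × Fin K) (Fin N × Fin K) ℂ)).mulVec
      (Svec N K)) :
    star (Svec N K) ⬝ᵥ ψ = (1 / N : ℂ) ∧
    ∀ x y : Fin N,
      (∑ m : Fin K, ∑ j : Fin N, ∑ m' : Fin K,
          ψ ((x, m), (j, m')) * star (ψ ((y, m), (j, m')))) / (star ψ ⬝ᵥ ψ)
        = ρ x y := by
  have hKN : (0:ℝ) < (K:ℝ) * N := by positivity
  set c : ℂ := ((1 / Real.sqrt (K * N) : ℝ) : ℂ) with hc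
  have hcs : star c = c := by simp [hc, Complex.star_def, Complex.conj_ofReal]
  have hcc : c * c = 1 / ((K:ℂ) * N) := by
    rw [hc, ← Complex.ofReal_mul]
    rw [show (1 / Real.sqrt (K * N)) * (1 / Real.sqrt (K * N)) = 1 / ((K:ℝ) * N) by
      rw [div_mul_div_comm, one_mul, Real.mul_self_sqrt hKN.le]]
    push_cast
    ring
  -- pointwise formula
  have hψ' : ∀ (x j : Fin N) (m m' : Fin K), ψ ((x,m),(j,m')) =
      (∑ i, av i x * star (av i j) * (if m = m' ∧ (m:ℕ) < ka i then 1 else 0)) * c := by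
    intro x j m m'
    rw [hψ]
    simp only [Matrix.mulVec, dotProduct, Fintype.sum_prod_type, Svec, Matrix.one_apply,
      Prod.ext_iff, projMat, Matrix.kroneckerMap_apply]
    simp [Finset.sum_ite_eq, Finset.sum_ite_eq', eq_comm, mul_ite, ite_and, hc]
  have hale : ∀ i, a i ≤ 1 := by
    intro i
    calc a i ≤ ∑ j, a j := Finset.single_le_sum (fun j _ => hann j) (Finset.mem_univ i)
    _ = 1 := ha1
  have hkale : ∀ i, ka i ≤ K := by
    intro i
    have : (ka i : ℝ) ≤ (K : ℝ) := by
      rw [hka i]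
      have hKpos : (0:ℝ) < K := by exact_mod_cast hK
      nlinarith [hann i, hale i, hKpos]
    exact_mod_cast this
  have hsm : ∀ i, ∑ m : Fin K, (if (m:ℕ) < ka i then (1:ℂ) else 0) = (ka i : ℂ) := by
    intro i
    rw [Fin.sum_univ_eq_sum_range (fun x => if x < ka i then (1:ℂ) else 0),
       ← Finset.sum_range_add_sum_Ico _ (hkale i)]
    rw [Finset.sum_congr rfl (fun x hx => if_pos (Finset.mem_range.mp hx)),
        Finset.sum_congr rfl (fun x hx => if_neg (by simpa using (Finset.mem_Ico.mp hx).1.not_gt))]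
    simp
  have hka' : ∀ i, (ka i : ℂ) = (K : ℂ) * (a i : ℂ) := by
    intro i
    have := hka i
    exact_mod_cast congrArg (Complex.ofReal) this
  have hsumka : ∑ i, (ka i : ℂ) = (K : ℂ) := by
    have : ∑ i, (a i : ℂ) = 1 := by exact_mod_cast congrArg (Complex.ofReal) ha1
    simp only [hka', ← Finset.mul_sum, this, mul_one]
  have hao' : ∀ i i', ∑ j, star (av i j) * av i' j = if i = i' then (1:ℂ) else 0 := by
    intro i i'
    simpa [dotProduct] using hao i i'
  -- the key inner product computation
  have hnum : ∀ x y : Fin N, (∑ m : Fin K, ∑ j : Fin N, ∑ m' : Fin K,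
      ψ ((x, m), (j, m')) * star (ψ ((y, m), (j, m'))))
      = (c * c) * ∑ i, (ka i : ℂ) * (av i x * star (av i y)) := by
    intro x y
    have step : ∀ (m : Fin K) (j : Fin N) (m' : Fin K),
        ψ ((x, m), (j, m')) * star (ψ ((y, m), (j, m'))) =
        ∑ i, ∑ i', (c * c) *
          ((av i x * star (av i' y) * ((if m = m' ∧ (m:ℕ) < ka i then 1 else 0)
            * (if m = m' ∧ (m:ℕ) < ka i' then 1 else 0))) * (star (av i j) * av i' j)) := by
      intro m j m'
      rw [hψ' x j m m', hψ' y j m m']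
      rw [star_mul', hcs, star_sum]
      simp only [star_mul', star_star, apply_ite (star : ℂ → ℂ), star_one, star_zero]
      rw [mul_mul_mul_comm, Finset.sum_mul_sum, Finset.sum_mul]
      refine Finset.sum_congr rfl fun i _ => ?_
      rw [Finset.sum_mul]
      refine Finset.sum_congr rfl fun i' _ => ?_
      ring
    simp only [step, ← Finset.mul_sum]
    congr 1
    have h1 : ∀ (m m' : Fin K), (∑ j : Fin N, ∑ i, ∑ i',
        ((av i x * star (av i' y) * ((if m = m' ∧ (m:ℕ) < ka i then 1 else 0)
            * (if m = m' ∧ (m:ℕ) < ka i' then 1 else 0))) * (star (av i j) * av i' j)))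
        = ∑ i, av i x * star (av i y) * (if m = m' ∧ (m:ℕ) < ka i then 1 else 0) := by
      intro m m'
      rw [Finset.sum_comm]
      refine Finset.sum_congr rfl fun i _ => ?_
      rw [Finset.sum_comm]
      have : ∀ i', (∑ j, ((av i x * star (av i' y) * ((if m = m' ∧ (m:ℕ) < ka i then 1 else 0)
            * (if m = m' ∧ (m:ℕ) < ka i' then 1 else 0))) * (star (av i j) * av i' j)))
          = (av i x * star (av i' y) * ((if m = m' ∧ (m:ℕ) < ka i then 1 else 0)
            * (if m = m' ∧ (m:ℕ) < ka i' then 1 else 0))) * (if i = i' then (1:ℂ) else 0) := by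
        intro i'
        rw [← Finset.mul_sum, hao']
      simp only [this]
      simp only [mul_ite, mul_one, mul_zero]
      rw [Finset.sum_ite_eq]
      simp only [Finset.mem_univ, if_true]
      by_cases h1 : m = m'
      · subst h1
        by_cases h2 : (m:ℕ) < ka i <;> simp [h2]
      · simp [h1]
    calc (∑ m : Fin K, ∑ j : Fin N, ∑ m' : Fin K, ∑ i, ∑ i',
        ((av i x * star (av i' y) * ((if m = m' ∧ (m:ℕ) < ka i then 1 else 0)
            * (if m = m' ∧ (m:ℕ) < ka i' then 1 else 0))) * (star (av i j) * av i' j)))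
        = ∑ m : Fin K, ∑ m' : Fin K, ∑ j : Fin N, ∑ i, ∑ i',
        ((av i x * star (av i' y) * ((if m = m' ∧ (m:ℕ) < ka i then 1 else 0)
            * (if m = m' ∧ (m:ℕ) < ka i' then 1 else 0))) * (star (av i j) * av i' j)) := by
          exact Finset.sum_congr rfl fun m _ => Finset.sum_comm
      _ = ∑ m : Fin K, ∑ m' : Fin K, ∑ i,
            av i x * star (av i y) * (if m = m' ∧ (m:ℕ) < ka i then 1 else 0) := by
          exact Finset.sum_congr rfl fun m _ => Finset.sum_congr rfl fun m' _ => h1 m m'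
      _ = ∑ m : Fin K, ∑ i, av i x * star (av i y) * (if (m:ℕ) < ka i then 1 else 0) := by
          refine Finset.sum_congr rfl fun m _ => ?_
          rw [Finset.sum_comm]
          refine Finset.sum_congr rfl fun i _ => ?_
          simp [ite_and, Finset.sum_ite_eq, mul_ite]
      _ = ∑ i, (ka i : ℂ) * (av i x * star (av i y)) := by
          rw [Finset.sum_comm]
          refine Finset.sum_congr rfl fun i _ => ?_
          rw [← Finset.mul_sum, hsm i]
          ring
  -- diagonal sum of av
  have hdiag : ∀ i, ∑ x : Fin N, av i x * star (av i x) = 1 := by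
    intro i
    have := hao' i i
    rw [if_pos rfl] at this
    rw [← this]
    exact Finset.sum_congr rfl fun j _ => mul_comm _ _
  -- denominator
  have hden : star ψ ⬝ᵥ ψ = (1 / N : ℂ) := by
    have : star ψ ⬝ᵥ ψ = ∑ x : Fin N, ∑ m : Fin K, ∑ j : Fin N, ∑ m' : Fin K,
        ψ ((x, m), (j, m')) * star (ψ ((x, m), (j, m'))) := by
      simp only [dotProduct, Fintype.sum_prod_type, Pi.star_apply]
      exact Finset.sum_congr rfl fun x _ => Finset.sum_congr rfl fun m _ =>
        Finset.sum_congr rfl fun j _ => Finset.sum_congr rfl fun m' _ => mul_comm _ _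
    rw [this]
    simp only [hnum]
    rw [← Finset.mul_sum, Finset.sum_comm]
    have : ∑ i, ∑ x : Fin N, (ka i : ℂ) * (av i x * star (av i x))
        = ∑ i, (ka i : ℂ) := by
      refine Finset.sum_congr rfl fun i _ => ?_
      rw [← Finset.mul_sum, hdiag i, mul_one]
    rw [this, hsumka, hcc]
    have hK0 : (K:ℂ) ≠ 0 := Nat.cast_ne_zero.mpr hK.ne'
    have hN0 : (N:ℂ) ≠ 0 := Nat.cast_ne_zero.mpr hN.ne'
    field_simp
  refine ⟨?_, ?_⟩
  · -- first part
    have hS : star (Svec N K) ⬝ᵥ ψ = ∑ x : Fin N, ∑ m : Fin K, c * ψ ((x,m),(x,m)) := by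
      simp only [dotProduct, Fintype.sum_prod_type, Pi.star_apply, Svec]
      simp only [apply_ite (star : ℂ → ℂ), star_zero, hcs, ite_mul, zero_mul]
      refine Finset.sum_congr rfl fun x _ => Finset.sum_congr rfl fun m _ => ?_
      rw [Finset.sum_comm]
      simp [Finset.sum_ite_eq, ite_and]
      left
      rw [hc]
      push_cast [Real.sqrt_mul (Nat.cast_nonneg K : (0:ℝ) ≤ K)]
      ring
    rw [hS]
    have : ∀ (x : Fin N) (m : Fin K), c * ψ ((x,m),(x,m)) =
        (c * c) * ∑ i, av i x * star (av i x) * (if (m:ℕ) < ka i then 1 else 0) := by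
      intro x m
      rw [hψ' x x m m]
      simp only [eq_self_iff_true, true_and]
      ring
    simp only [this, ← Finset.mul_sum]
    rw [show (∑ x : Fin N, ∑ m : Fin K, ∑ i,
        av i x * star (av i x) * (if (m:ℕ) < ka i then (1:ℂ) else 0)) = (K:ℂ) from ?_]
    · rw [hcc]
      have hK0 : (K:ℂ) ≠ 0 := Nat.cast_ne_zero.mpr hK.ne'
      field_simp
    · rw [Finset.sum_comm]
      calc (∑ m : Fin K, ∑ x : Fin N, ∑ i,
            av i x * star (av i x) * (if (m:ℕ) < ka i then (1:ℂ) else 0))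
          = ∑ m : Fin K, ∑ i, ∑ x : Fin N,
            av i x * star (av i x) * (if (m:ℕ) < ka i then (1:ℂ) else 0) := by
            exact Finset.sum_congr rfl fun m _ => Finset.sum_comm
        _ = ∑ m : Fin K, ∑ i, (if (m:ℕ) < ka i then (1:ℂ) else 0) := by
            refine Finset.sum_congr rfl fun m _ => Finset.sum_congr rfl fun i _ => ?_
            rw [← Finset.sum_mul, hdiag i, one_mul]
        _ = ∑ i, ∑ m : Fin K, (if (m:ℕ) < ka i then (1:ℂ) else 0) := Finset.sum_comm
        _ = ∑ i, (ka i : ℂ) := Finset.sum_congr rfl fun i _ => hsm i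
        _ = (K:ℂ) := hsumka
  · -- second part
    intro x y
    rw [hnum x y, hden]
    have hN0 : (N:ℂ) ≠ 0 := Nat.cast_ne_zero.mpr hN.ne'
    have hK0 : (K:ℂ) ≠ 0 := Nat.cast_ne_zero.mpr hK.ne'
    rw [hcc, hρ]
    simp only [Matrix.sum_apply, Matrix.smul_apply, Matrix.vecMulVec_apply, Pi.star_apply,
      smul_eq_mul]
    rw [Finset.mul_sum, div_eq_iff (by simp [hN0] : (1/(N:ℂ)) ≠ 0)]
    rw [Finset.sum_mul]
    refine Finset.sum_congr rfl fun i _ => ?_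
    rw [hka' i]
    field_simp
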